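/- Static regret for Optimistic Greedy Projection (OGP): Let E be a real Hilbert space, C ⊆ E nonempty, closed, convex and bounded with diameter ρ = sup_{x,y∈C}‖x − y‖, a ∈ C, T ≥ 1, and 0 < θ_1 ≤ θ_2 ≤ … ≤ θ_T. Let x̂_t* ∈ E, define x̃_1 = a, x̃_t = P_C(x̃_{t−1} − θ_{t−1} x_{t−1}*) for t ≥ 2, and x_t = P_C(x̃_t − θ_t x̂_t*), and let f_t: E → ℝ ∪ {+∞} be functions with x_t* ∈ ∂f_t(x_t). Then for every z ∈ C with f_t(z) < +∞ for all t: Σ_{t=1}^T (f_t(x_t) − f_t(z)) ≤ (1/(2θ_1))‖z − a‖² + Σ_{t=1}^T (1/θ_t) Q_ρ*(θ_t‖x_t* − x̂_t*‖) − Σ_{t=1}^T (1/(2θ_t)) ‖x_t − x̃_t‖². -/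

import Mathlib

open Finset

/-- Subdifferential of an extended-real-valued function on a real Hilbert space:
`∂f(x) = {g : f(y) ≥ f(x) + ⟨g, y − x⟩ for all y}`. -/
def subdiff {E : Type*} [NormedAddCommGroup E] [InnerProductSpace ℝ E]
    (f : E → EReal) (x : E) : Set E :=
  {g | ∀ y : E, f x + (((inner ℝ g (y - x) : ℝ)) : EReal) ≤ f y}

/-- `Q_ρ*(κ) = κ²/2 − (|κ| − ρ)₊²/2`, the conjugate of the truncated quadratic `Q_ρ`. -/
noncomputable def Qstar (ρ : ℝ) (κ : ℝ) : ℝ :=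
  κ ^ 2 / 2 - (max (|κ| - ρ) 0) ^ 2 / 2


section AuxOGP

variable {E : Type*} [NormedAddCommGroup E] [InnerProductSpace ℝ E]

/-- variational inequality for a nearest-point map -/
lemma proj_var {C : Set E} (hCconv : Convex ℝ C) {P : E → E}
    (hP : ∀ x : E, P x ∈ C ∧ ∀ y ∈ C, ‖x - P x‖ ≤ ‖x - y‖) (w : E) :
    ∀ c ∈ C, (inner ℝ (w - P w) (c - P w) : ℝ) ≤ 0 := by
  have hmem := (hP w).1
  haveI : Nonempty C := ⟨⟨P w, hmem⟩⟩
  have hinf : ‖w - P w‖ = ⨅ v : C, ‖w - v‖ := by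
    apply le_antisymm
    · exact le_ciInf fun v => (hP w).2 v v.2
    · exact ciInf_le ⟨0, fun _ ⟨_, h⟩ => h ▸ norm_nonneg _⟩ (⟨P w, hmem⟩ : C)
  exact (norm_eq_iInf_iff_real_inner_le_zero hCconv hmem).mp hinf

/-- three-point inequality for a projected gradient step -/
lemma three_point {C : Set E} (hCconv : Convex ℝ C) {P : E → E}
    (hP : ∀ x : E, P x ∈ C ∧ ∀ y ∈ C, ‖x - P x‖ ≤ ‖x - y‖)
    {θ : ℝ} (hθ : 0 < θ) (x g : E) {y z : E} (hy : y = P (x - θ • g)) (hz : z ∈ C) :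
    (inner ℝ g (y - z) : ℝ) ≤ (1 / (2 * θ)) * (‖x - z‖ ^ 2 - ‖y - z‖ ^ 2 - ‖x - y‖ ^ 2) := by
  have hvar := proj_var hCconv hP (x - θ • g) z hz
  rw [← hy] at hvar
  have hexp : (inner ℝ (x - θ • g - y) (z - y) : ℝ)
      = (inner ℝ (x - y) (z - y) : ℝ) - θ * (inner ℝ g (z - y) : ℝ) := by
    rw [show x - θ • g - y = (x - y) - θ • g by abel, inner_sub_left, real_inner_smul_left]
  have hgz : (inner ℝ g (z - y) : ℝ) = - (inner ℝ g (y - z) : ℝ) := by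
    rw [show z - y = -(y - z) by abel, inner_neg_right]
  have hid : 2 * (inner ℝ (x - y) (y - z) : ℝ) = ‖x - z‖ ^ 2 - ‖y - z‖ ^ 2 - ‖x - y‖ ^ 2 := by
    have h1 : x - z = (x - y) + (y - z) := by abel
    rw [h1, norm_add_sq_real]; ring
  have hxy : (inner ℝ (x - y) (z - y) : ℝ) = - (inner ℝ (x - y) (y - z) : ℝ) := by
    rw [show z - y = -(y - z) by abel, inner_neg_right]
  rw [hexp, hgz, hxy] at hvar
  rw [← hid, show (1:ℝ) / (2 * θ) * (2 * (inner ℝ (x - y) (y - z) : ℝ))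
      = (inner ℝ (x - y) (y - z) : ℝ) / θ from by field_simp]
  rw [le_div_iff₀ hθ]
  nlinarith [hvar]

/-- Fenchel–Young for the truncated quadratic -/
lemma FY {ρ s κ : ℝ} (hs0 : 0 ≤ s) (hsρ : s ≤ ρ) (hκ : 0 ≤ κ) :
    κ * s ≤ s ^ 2 / 2 + Qstar ρ κ := by
  rw [Qstar, abs_of_nonneg hκ]
  rcases le_or_gt κ ρ with h | h
  · rw [max_eq_right (by linarith)]; nlinarith [sq_nonneg (s - κ)]
  · rw [max_eq_left (by linarith)]; nlinarith [sq_nonneg (s - κ), sq_nonneg (κ - ρ)]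

/-- telescoping sum with increasing step sizes -/
lemma tele (θ a : ℕ → ℝ) (ha : ∀ t, 0 ≤ a t) :
    ∀ T, 1 ≤ T → (∀ t ∈ Icc 1 T, 0 < θ t) → (∀ t ∈ Icc 2 T, θ (t - 1) ≤ θ t) →
    ∑ t ∈ Icc 1 T, (1 / (2 * θ t)) * (a t - a (t + 1))
      ≤ (1 / (2 * θ 1)) * a 1 - (1 / (2 * θ T)) * a (T + 1) := by
  intro T
  induction T with
  | zero => omega
  | succ n ih =>
    intro _ hθ hmono
    rcases Nat.eq_or_lt_of_le (show 1 ≤ n + 1 by omega) with h1 | h1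
    · rw [← h1]
      simp only [Icc_self, Finset.sum_singleton]
      exact le_of_eq (by ring)
    · have hn : 1 ≤ n := by omega
      rw [Finset.sum_Icc_succ_top (by omega : 1 ≤ n + 1)]
      have hih := ih hn (fun t ht => hθ t (by simp at ht ⊢; omega))
        (fun t ht => hmono t (by simp at ht ⊢; omega))
      have hθn : 0 < θ n := hθ n (by simp; omega)
      have hθn1 : 0 < θ (n + 1) := hθ (n + 1) (by simp)
      have hm : θ n ≤ θ (n + 1) := by
        have := hmono (n + 1) (by simp; omega); simpa using this
      have hinv : 1 / (2 * θ (n + 1)) ≤ 1 / (2 * θ n) := by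
        apply one_div_le_one_div_of_le (by positivity); linarith
      have h2 : (1 / (2 * θ (n + 1))) * a (n + 1) ≤ (1 / (2 * θ n)) * a (n + 1) :=
        mul_le_mul_of_nonneg_right hinv (ha _)
      nlinarith [hih]

lemma ereal_step (A B : EReal) (c : ℝ) (hAB : A + (c : EReal) ≤ B) (hB : B < ⊤) :
    A - B ≤ ((-c : ℝ) : EReal) := by
  induction B using EReal.rec with
  | top => exact absurd hB (lt_irrefl _)
  | bot =>
    have hA : A = ⊥ := by
      rcases (EReal.add_eq_bot_iff.mp (le_bot_iff.mp hAB)) with h | h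
      · exact h
      · exact absurd h (EReal.coe_ne_bot c)
    rw [hA, EReal.bot_sub]; exact bot_le
  | coe b =>
    induction A using EReal.rec with
    | bot => rw [EReal.bot_sub]; exact bot_le
    | top =>
      exfalso
      rw [EReal.top_add_coe] at hAB
      exact EReal.coe_ne_top b (top_le_iff.mp hAB)
    | coe s =>
      rw [← EReal.coe_add] at hAB
      rw [← EReal.coe_sub, EReal.coe_le_coe_iff]
      have := EReal.coe_le_coe_iff.mp hAB
      linarith


lemma coe_sum_ereal (s : Finset ℕ) (g : ℕ → ℝ) :
    ((∑ t ∈ s, g t : ℝ) : EReal) = ∑ t ∈ s, ((g t : ℝ) : EReal) := by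
  induction s using Finset.cons_induction with
  | empty => simp
  | cons a s h ih => rw [Finset.sum_cons, Finset.sum_cons, EReal.coe_add, ih]

end AuxOGP

/-- **Static regret for Optimistic Greedy Projection (OGP).** -/
theorem static_regret_OGP
    {E : Type*} [NormedAddCommGroup E] [InnerProductSpace ℝ E] [CompleteSpace E]
    (C : Set E) (hCne : C.Nonempty) (hCclosed : IsClosed C) (hCconv : Convex ℝ C)
    (hCbdd : Bornology.IsBounded C)
    (P : E → E)
    (hP : ∀ x : E, P x ∈ C ∧ ∀ y ∈ C, ‖x - P x‖ ≤ ‖x - y‖)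
    (a : E) (ha : a ∈ C)
    (T : ℕ) (hT : 1 ≤ T)
    (θ : ℕ → ℝ) (hθpos : 0 < θ 1)
    (hθmono : ∀ s t : ℕ, 1 ≤ s → s ≤ t → t ≤ T → θ s ≤ θ t)
    (xstar xhat : ℕ → E)
    (xtil xt : ℕ → E)
    (hxtil1 : xtil 1 = a)
    (hxtil : ∀ t ∈ Icc 2 T, xtil t = P (xtil (t - 1) - θ (t - 1) • xstar (t - 1)))
    (hxt : ∀ t ∈ Icc 1 T, xt t = P (xtil t - θ t • xhat t))
    (f : ℕ → E → EReal)
    (hf : ∀ t ∈ Icc 1 T, xstar t ∈ subdiff (f t) (xt t))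
    (z : E) (hzC : z ∈ C) (hz : ∀ t ∈ Icc 1 T, f t z < ⊤) :
    ∑ t ∈ Icc 1 T, (f t (xt t) - f t z)
      ≤ (((1 / (2 * θ 1)) * ‖z - a‖ ^ 2
          + ∑ t ∈ Icc 1 T, (1 / θ t) *
              Qstar (Metric.diam C) (θ t * ‖xstar t - xhat t‖)
          - ∑ t ∈ Icc 1 T, (1 / (2 * θ t)) * ‖xt t - xtil t‖ ^ 2 : ℝ) : EReal) := by
    classical
  have hθt : ∀ t ∈ Icc 1 T, 0 < θ t := by
    intro t ht
    simp only [mem_Icc] at ht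
    exact lt_of_lt_of_le hθpos (hθmono 1 t le_rfl ht.1 ht.2)
  set ρ := Metric.diam C with hρ
  set u : ℕ → E := fun t => if t ≤ T then xtil t else P (xtil T - θ T • xstar T) with hu
  have huu : ∀ t ∈ Icc 1 T, u t = xtil t := by
    intro t ht; simp only [mem_Icc] at ht; simp [hu, ht.2]
  have hu' : ∀ t ∈ Icc 1 T, u (t + 1) = P (xtil t - θ t • xstar t) := by
    intro t ht; simp only [mem_Icc] at ht
    rcases eq_or_lt_of_le ht.2 with h | h
    · subst h; simp [hu]
    · have h2 : t + 1 ≤ T := h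
      have h3 := hxtil (t + 1) (by simp only [mem_Icc]; omega)
      simp only [Nat.add_sub_cancel] at h3
      simp [hu, h2, h3]
  have hxtC : ∀ t ∈ Icc 1 T, xt t ∈ C := fun t ht => (hxt t ht) ▸ (hP _).1
  have huC : ∀ t ∈ Icc 1 T, u (t + 1) ∈ C := fun t ht => (hu' t ht) ▸ (hP _).1
  have key : ∀ t ∈ Icc 1 T,
      (inner ℝ (xstar t) (xt t - z) : ℝ)
        ≤ (1 / (2 * θ t)) * (‖u t - z‖ ^ 2 - ‖u (t + 1) - z‖ ^ 2)
          + (1 / θ t) * Qstar ρ (θ t * ‖xstar t - xhat t‖)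
          - (1 / (2 * θ t)) * ‖xt t - xtil t‖ ^ 2 := by
    intro t ht
    have hθ := hθt t ht
    have hC : (inner ℝ (xstar t) (u (t + 1) - z) : ℝ)
        ≤ (1 / (2 * θ t)) * (‖xtil t - z‖ ^ 2 - ‖u (t + 1) - z‖ ^ 2 - ‖xtil t - u (t + 1)‖ ^ 2) :=
      three_point hCconv hP hθ (xtil t) (xstar t) (hu' t ht) hzC
    have hB : (inner ℝ (xhat t) (xt t - u (t + 1)) : ℝ)
        ≤ (1 / (2 * θ t)) * (‖xtil t - u (t + 1)‖ ^ 2 - ‖xt t - u (t + 1)‖ ^ 2 - ‖xtil t - xt t‖ ^ 2) :=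
      three_point hCconv hP hθ (xtil t) (xhat t) (hxt t ht) (huC t ht)
    have hs0 : (0 : ℝ) ≤ ‖xt t - u (t + 1)‖ := norm_nonneg _
    have hsρ : ‖xt t - u (t + 1)‖ ≤ ρ := by
      rw [← dist_eq_norm]
      exact Metric.dist_le_diam_of_mem hCbdd (hxtC t ht) (huC t ht)
    have hFY := FY hs0 hsρ (by positivity : (0 : ℝ) ≤ θ t * ‖xstar t - xhat t‖)
    have hA : (inner ℝ (xstar t - xhat t) (xt t - u (t + 1)) : ℝ)
        ≤ (1 / (2 * θ t)) * ‖xt t - u (t + 1)‖ ^ 2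
          + (1 / θ t) * Qstar ρ (θ t * ‖xstar t - xhat t‖) := by
      have h1 : (inner ℝ (xstar t - xhat t) (xt t - u (t + 1)) : ℝ)
          ≤ ‖xstar t - xhat t‖ * ‖xt t - u (t + 1)‖ := real_inner_le_norm _ _
      have h2 : θ t * (‖xstar t - xhat t‖ * ‖xt t - u (t + 1)‖)
          ≤ ‖xt t - u (t + 1)‖ ^ 2 / 2 + Qstar ρ (θ t * ‖xstar t - xhat t‖) := by
        calc θ t * (‖xstar t - xhat t‖ * ‖xt t - u (t + 1)‖)
            = (θ t * ‖xstar t - xhat t‖) * ‖xt t - u (t + 1)‖ := by ring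
          _ ≤ _ := hFY
      have h3 : ‖xstar t - xhat t‖ * ‖xt t - u (t + 1)‖
          ≤ (1 / (2 * θ t)) * ‖xt t - u (t + 1)‖ ^ 2
            + (1 / θ t) * Qstar ρ (θ t * ‖xstar t - xhat t‖) := by
        rw [show (1 / (2 * θ t)) * ‖xt t - u (t + 1)‖ ^ 2
              + (1 / θ t) * Qstar ρ (θ t * ‖xstar t - xhat t‖)
            = (‖xt t - u (t + 1)‖ ^ 2 / 2 + Qstar ρ (θ t * ‖xstar t - xhat t‖)) / θ t from by
          field_simp]
        rw [le_div_iff₀ hθ]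
        nlinarith [h2]
      linarith
    have hdec : (inner ℝ (xstar t) (xt t - z) : ℝ)
        = (inner ℝ (xstar t - xhat t) (xt t - u (t + 1)) : ℝ)
          + (inner ℝ (xhat t) (xt t - u (t + 1)) : ℝ)
          + (inner ℝ (xstar t) (u (t + 1) - z) : ℝ) := by
      simp only [inner_sub_left]
      rw [show xt t - z = (xt t - u (t + 1)) + (u (t + 1) - z) by abel, inner_add_right]
      ring
    rw [norm_sub_rev (xtil t) (xt t)] at hB
    rw [huu t ht, hdec]
    linarith [hA, hB, hC]
  have hsum : ∑ t ∈ Icc 1 T, (inner ℝ (xstar t) (xt t - z) : ℝ)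
      ≤ (1 / (2 * θ 1)) * ‖z - a‖ ^ 2
        + ∑ t ∈ Icc 1 T, (1 / θ t) * Qstar ρ (θ t * ‖xstar t - xhat t‖)
        - ∑ t ∈ Icc 1 T, (1 / (2 * θ t)) * ‖xt t - xtil t‖ ^ 2 := by
    have h1 := Finset.sum_le_sum key
    rw [Finset.sum_sub_distrib, Finset.sum_add_distrib] at h1
    have h2 : ∑ t ∈ Icc 1 T, (1 / (2 * θ t)) * (‖u t - z‖ ^ 2 - ‖u (t + 1) - z‖ ^ 2)
        ≤ (1 / (2 * θ 1)) * ‖u 1 - z‖ ^ 2 - (1 / (2 * θ T)) * ‖u (T + 1) - z‖ ^ 2 :=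
      tele θ (fun t => ‖u t - z‖ ^ 2) (fun t => sq_nonneg _) T hT hθt
        (fun t ht => by
          simp only [mem_Icc] at ht
          exact hθmono (t - 1) t (by omega) (by omega) ht.2)
    have h4 : ‖u 1 - z‖ ^ 2 = ‖z - a‖ ^ 2 := by
      rw [huu 1 (by simp only [mem_Icc]; omega), hxtil1, norm_sub_rev]
    rw [h4] at h2
    have hθT : 0 < θ T := hθt T (by simp only [mem_Icc]; omega)
    have h3 : (0 : ℝ) ≤ (1 / (2 * θ T)) * ‖u (T + 1) - z‖ ^ 2 := by positivity
    linarith [h1, h2, h3]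
  have hkey2 : ∀ t ∈ Icc 1 T,
      f t (xt t) - f t z ≤ (((inner ℝ (xstar t) (xt t - z) : ℝ)) : EReal) := by
    intro t ht
    have h := hf t ht z
    have hc : -(inner ℝ (xstar t) (z - xt t) : ℝ) = (inner ℝ (xstar t) (xt t - z) : ℝ) := by
      rw [show z - xt t = -(xt t - z) by abel, inner_neg_right]; ring
    have h2 := ereal_step (f t (xt t)) (f t z) (inner ℝ (xstar t) (z - xt t) : ℝ) h (hz t ht)
    rwa [hc] at h2
  calc ∑ t ∈ Icc 1 T, (f t (xt t) - f t z)
      ≤ ∑ t ∈ Icc 1 T, (((inner ℝ (xstar t) (xt t - z) : ℝ)) : EReal) :=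
        Finset.sum_le_sum hkey2
    _ = ((∑ t ∈ Icc 1 T, (inner ℝ (xstar t) (xt t - z) : ℝ) : ℝ) : EReal) :=
        (coe_sum_ereal _ _).symm
    _ ≤ _ := EReal.coe_le_coe_iff.mpr hsum
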